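/- Equip ℝ² with the ℓ∞ metric. For all D, D' ⊆ ℝ² and all Θ ⊆ ℝ², the Θ-bottleneck distance is unchanged by discarding points lying in Θ: d_Θ(D, D') = d_Θ(D ∖ Θ, D' ∖ Θ). -/

import Mathlib

open ENNReal

/-- A partial matching between two diagrams `D, D' ⊆ ℝ²`: a set of pairs
`Γ ⊆ D × D'` in which every point of `D` occurs in at most one pair and every
point of `D'` occurs in at most one pair. -/
def IsPartialMatching (D D' : Set (ℝ × ℝ)) (Γ : Set ((ℝ × ℝ) × (ℝ × ℝ))) : Prop :=
  Γ ⊆ D ×ˢ D' ∧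
  (∀ p q q', (p, q) ∈ Γ → (p, q') ∈ Γ → q = q') ∧
  (∀ p p' q, (p, q) ∈ Γ → (p', q) ∈ Γ → p = p')

/-- The `Θ`-cost of a partial matching `Γ` between `D` and `D'`: the supremum (in
`[0,∞]`) of the `ℓ∞` distances between matched pairs, together with the extended
distances from each unmatched point of `D` and of `D'` to the set `Θ`.
(The product metric on `ℝ × ℝ` is the `ℓ∞` metric.) -/
noncomputable def matchingCost (Θ D D' : Set (ℝ × ℝ))
    (Γ : Set ((ℝ × ℝ) × (ℝ × ℝ))) : ℝ≥0∞ :=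
  (⨆ pq ∈ Γ, edist pq.1 pq.2) ⊔
  (⨆ p ∈ {p ∈ D | ∀ q, (p, q) ∉ Γ}, EMetric.infEdist p Θ) ⊔
  (⨆ q ∈ {q ∈ D' | ∀ p, (p, q) ∉ Γ}, EMetric.infEdist q Θ)

/-- The `Θ`-bottleneck distance between `D, D' ⊆ ℝ²`: the infimum of the `Θ`-costs
over all partial matchings between `D` and `D'`. -/
noncomputable def bottleneckDist (Θ D D' : Set (ℝ × ℝ)) : ℝ≥0∞ :=
  ⨅ Γ ∈ {Γ | IsPartialMatching D D' Γ}, matchingCost Θ D D' Γ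

/-- The `Θ`-bottleneck distance is unchanged by discarding the
points lying in `Θ`: `d_Θ(D, D') = d_Θ(D \ Θ, D' \ Θ)`. -/
theorem bottleneckDist_diff_eq
    (D D' Θ : Set (ℝ × ℝ)) :
    bottleneckDist Θ D D' = bottleneckDist Θ (D \ Θ) (D' \ Θ) := by
  unfold bottleneckDist
  apply le_antisymm
  · -- any matching of the diffs is a matching of the full diagrams, with ≤ cost
    refine le_iInf₂ fun Γ hΓ => ?_
    obtain ⟨hsub, h1, h2⟩ := hΓ
    refine iInf₂_le_of_le Γ
      ⟨hsub.trans (Set.prod_mono Set.diff_subset Set.diff_subset), h1, h2⟩ ?_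
    unfold matchingCost
    refine sup_le (sup_le (le_sup_of_le_left le_sup_left) ?_) ?_
    · refine le_sup_of_le_left <| le_trans ?_ le_sup_right
      refine iSup₂_le fun p hp => ?_
      by_cases hpΘ : p ∈ Θ
      · exact (EMetric.infEdist_zero_of_mem hpΘ).le.trans zero_le
      · exact le_iSup₂_of_le p ⟨⟨hp.1, hpΘ⟩, hp.2⟩ le_rfl
    · refine le_trans ?_ le_sup_right
      refine iSup₂_le fun q hq => ?_
      by_cases hqΘ : q ∈ Θ
      · exact (EMetric.infEdist_zero_of_mem hqΘ).le.trans zero_le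
      · exact le_iSup₂_of_le q ⟨⟨hq.1, hqΘ⟩, hq.2⟩ le_rfl
  · refine le_iInf₂ fun Γ hΓ => ?_
    obtain ⟨hsub, h1, h2⟩ := hΓ
    set Γ' : Set ((ℝ × ℝ) × (ℝ × ℝ)) := {pq ∈ Γ | pq.1 ∉ Θ ∧ pq.2 ∉ Θ} with hΓ'def
    have hΓ'sub : Γ' ⊆ Γ := Set.sep_subset _ _
    have hmem : IsPartialMatching (D \ Θ) (D' \ Θ) Γ' := by
      refine ⟨?_, fun p q q' hq hq' => h1 p q q' (hΓ'sub hq) (hΓ'sub hq'),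
        fun p p' q hp hp' => h2 p p' q (hΓ'sub hp) (hΓ'sub hp')⟩
      intro pq hpq
      obtain ⟨hmem, hp1, hp2⟩ := hpq
      have := hsub hmem
      exact ⟨⟨this.1, hp1⟩, ⟨this.2, hp2⟩⟩
    refine iInf₂_le_of_le Γ' hmem ?_
    unfold matchingCost
    refine sup_le (sup_le ?_ ?_) ?_
    · exact le_sup_of_le_left <| le_sup_of_le_left <|
        iSup₂_le fun pq hpq => le_iSup₂_of_le pq (hΓ'sub hpq) le_rfl
    · refine iSup₂_le fun p hp => ?_
      obtain ⟨⟨hpD, hpΘ⟩, hpun⟩ := hp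
      by_cases hm : ∃ q, (p, q) ∈ Γ
      · obtain ⟨q, hq⟩ := hm
        have hqΘ : q ∈ Θ := by
          by_contra hqΘ
          exact hpun q ⟨hq, hpΘ, hqΘ⟩
        calc EMetric.infEdist p Θ ≤ edist p q := EMetric.infEdist_le_edist_of_mem hqΘ
          _ ≤ _ := le_sup_of_le_left <| le_sup_of_le_left <|
              le_iSup₂_of_le (p, q) hq le_rfl
      · push_neg at hm
        exact le_sup_of_le_left <| le_sup_of_le_right <|
          le_iSup₂_of_le p ⟨hpD, hm⟩ le_rfl
    · refine iSup₂_le fun q hq => ?_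
      obtain ⟨⟨hqD, hqΘ⟩, hqun⟩ := hq
      by_cases hm : ∃ p, (p, q) ∈ Γ
      · obtain ⟨p, hp⟩ := hm
        have hpΘ : p ∈ Θ := by
          by_contra hpΘ
          exact hqun p ⟨hp, hpΘ, hqΘ⟩
        calc EMetric.infEdist q Θ ≤ edist q p := EMetric.infEdist_le_edist_of_mem hpΘ
          _ = edist p q := edist_comm _ _
          _ ≤ _ := le_sup_of_le_left <| le_sup_of_le_left <|
              le_iSup₂_of_le (p, q) hp le_rfl
      · push_neg at hm
        exact le_sup_of_le_right <| le_iSup₂_of_le q ⟨hqD, hm⟩ le_rfl
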